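/- arXiv:2403.02968 — 2 statements merged into one kernel-verified Lean document; each statement's English description precedes it below -/
import Mathlib

section
/- For all real x with x ≥ 1/(10N) (where N ≥ 1 is a natural number), we have -log(x) ≤ -(x-1) + 2·log(10N)·(x-1)². -/
/-- For all real `x` with `x ≥ 1/(10N)` (where `N ≥ 1` is a natural number),
`-log x ≤ -(x-1) + 2 log(10N) (x-1)²`. -/
theorem stmt_0 (N : ℕ) (hN : 1 ≤ N) (x : ℝ) (hx : x ≥ 1 / (10 * (N : ℝ))) :
    -Real.log x ≤ -(x - 1) + 2 * Real.log (10 * (N : ℝ)) * (x - 1) ^ 2 := by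
  have hN1 : (1 : ℝ) ≤ (N : ℝ) := by exact_mod_cast hN
  have h10N : (10 : ℝ) ≤ 10 * (N : ℝ) := by nlinarith
  have h10Npos : (0 : ℝ) < 10 * (N : ℝ) := by linarith
  have hxpos : 0 < x := lt_of_lt_of_le (by positivity) hx
  -- log 10 ≥ 2
  have hexp : Real.exp 2 ≤ 10 := by
    have h := Real.exp_one_lt_d9
    have h2 : Real.exp 2 = Real.exp 1 * Real.exp 1 := by
      rw [← Real.exp_add]; norm_num
    nlinarith [Real.exp_pos 1]
  have hlog10 : (2 : ℝ) ≤ Real.log (10 * (N : ℝ)) := by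
    rw [Real.le_log_iff_exp_le h10Npos]
    linarith
  set L := Real.log (10 * (N : ℝ)) with hL
  have hc : (4 : ℝ) ≤ 2 * L := by linarith
  by_cases hcase : 1 / (2 * L) ≤ x
  · -- use log(1/x) ≤ 1/x - 1
    have hlog : Real.log x⁻¹ ≤ x⁻¹ - 1 := Real.log_le_sub_one_of_pos (by positivity)
    rw [Real.log_inv] at hlog
    have hinv : x⁻¹ ≤ 2 * L := by
      rw [inv_le_comm₀ hxpos (by linarith : (0:ℝ) < 2 * L), ← one_div]
      exact hcase
    have hxinv : x * x⁻¹ = 1 := mul_inv_cancel₀ (ne_of_gt hxpos)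
    have hkey : 0 ≤ (x - 1) ^ 2 * (2 * L - x⁻¹) :=
      mul_nonneg (sq_nonneg _) (by linarith)
    nlinarith [sq_nonneg (x - 1), mul_pos hxpos hxpos, mul_le_mul_of_nonneg_left hinv hxpos.le]
  · -- x < 1/(2L), use -log x ≤ L
    push_neg at hcase
    have hx1 : x < 1 := by
      have h1 : 1 / (2 * L) ≤ 1 := by
        rw [div_le_one (by linarith)]; linarith
      linarith
    have hlogx : -Real.log x ≤ L := by
      rw [← Real.log_inv]
      apply Real.log_le_log (by positivity)
      rw [inv_le_comm₀ (by positivity) h10Npos]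
      rw [ge_iff_le, div_le_iff₀ h10Npos] at hx
      rw [inv_le_iff_one_le_mul₀ h10Npos] at *
      nlinarith
    have h1x : 1 - 1 / (2 * L) ≤ 1 - x := by linarith
    have hsq : (1 - 1 / (2 * L)) ^ 2 ≤ (x - 1) ^ 2 := by
      have h0 : 0 ≤ 1 - 1 / (2 * L) := by
        have : 1 / (2 * L) ≤ 1 / 4 := by
          apply div_le_div_of_nonneg_left <;> linarith
        linarith
      nlinarith
    have hLinv : 2 * L * (1 / (2 * L)) = 1 := by
      field_simp
    -- RHS ≥ 2L(1-x)² ≥ 2L(1-1/(2L))² = 2L - 2 + 1/(2L) ≥ L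
    have : L ≤ 2 * L * (1 - 1 / (2 * L)) ^ 2 := by
      have hexpand : 2 * L * (1 - 1 / (2 * L)) ^ 2 = 2 * L - 2 + 1 / (2 * L) := by
        field_simp; ring
      rw [hexpand]
      have : 0 < 1 / (2 * L) := by positivity
      linarith
    nlinarith [sq_nonneg (x - 1)]
end

section
/- Let H be a d×d Hermitian matrix with ‖H‖_∞ ≤ 1 and Tr(H) = 0, and let 0 < t ≤ 1. Then |Tr(e^{itH})|² ≤ d² − d·t²·Tr(H²) + 4·d²·t⁴. -/
open scoped Matrix.Norms.L2Operator
open Matrix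

lemma cos_quad_aux {x : ℝ} (hx0 : 0 ≤ x) (hx : x ≤ 2) :
    Real.cos x ≤ 1 - x ^ 2 / 2 + x ^ 4 / 16 := by
  rcases eq_or_lt_of_le hx0 with h | h
  · simp [← h]
  · have hy0 : 0 < x / 2 := by linarith
    have hy1 : x / 2 ≤ 1 := by linarith
    have hs : x / 2 - (x / 2) ^ 3 / 4 < Real.sin (x / 2) := by
      have := Real.sin_gt_sub_cube hy0; nlinarith [pow_pos hy0 3]
    have h3 : (x / 2) ^ 3 ≤ (x / 2) ^ 1 := pow_le_pow_of_le_one hy0.le hy1 (by norm_num)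
    have hnn : 0 ≤ x / 2 - (x / 2) ^ 3 / 4 := by simp at h3; linarith
    have hcos : Real.cos x = 1 - 2 * Real.sin (x / 2) ^ 2 := by
      have h1 : Real.cos (2 * (x / 2)) = 2 * Real.cos (x / 2) ^ 2 - 1 :=
        Real.cos_two_mul (x / 2)
      have h2 : Real.sin (x/2) ^ 2 + Real.cos (x/2) ^ 2 = 1 := Real.sin_sq_add_cos_sq _
      rw [show 2 * (x / 2) = x by ring] at h1
      linarith
    nlinarith [sq_nonneg (x/2), sq_nonneg ((x/2)^3)]

lemma cos_quad_bound {x : ℝ} (hx : |x| ≤ 2) : Real.cos x ≤ 1 - x ^ 2 / 2 + x ^ 4 / 16 := by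
  have := cos_quad_aux (abs_nonneg x) hx
  rw [Real.cos_abs] at this
  calc Real.cos x ≤ 1 - |x| ^ 2 / 2 + |x| ^ 4 / 16 := this
    _ = 1 - x ^ 2 / 2 + x ^ 4 / 16 := by
        rw [sq_abs, show |x| ^ 4 = (|x| ^ 2) ^ 2 by ring, sq_abs]; ring

lemma key_sum_bound (d : ℕ) (e : Fin d → ℝ) (he : ∀ i, |e i| ≤ 1) (hsum : ∑ i, e i = 0)
    (t : ℝ) (ht0 : 0 < t) (ht1 : t ≤ 1) :
    (∑ i, Real.cos (t * e i)) ^ 2 + (∑ i, Real.sin (t * e i)) ^ 2 ≤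
      (d : ℝ) ^ 2 - (d : ℝ) * t ^ 2 * (∑ i, (e i) ^ 2) + 4 * (d : ℝ) ^ 2 * t ^ 4 := by
  set S := ∑ i, (e i) ^ 2 with hS
  have h1 : (∑ i, Real.cos (t * e i)) ^ 2 + (∑ i, Real.sin (t * e i)) ^ 2
      = ∑ i, ∑ j, Real.cos (t * e i - t * e j) := by
    rw [sq, sq, Finset.sum_mul_sum, Finset.sum_mul_sum, ← Finset.sum_add_distrib]
    refine Finset.sum_congr rfl fun i _ => ?_
    rw [← Finset.sum_add_distrib]
    refine Finset.sum_congr rfl fun j _ => ?_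
    rw [Real.cos_sub]
  have hperterm : ∀ i j : Fin d, Real.cos (t * e i - t * e j)
      ≤ 1 - t ^ 2 * (e i - e j) ^ 2 / 2 + t ^ 4 := by
    intro i j
    have hi := abs_le.mp (he i)
    have hj := abs_le.mp (he j)
    have hδ : (e i - e j) ^ 2 ≤ 4 := by nlinarith
    have habs : |t * e i - t * e j| ≤ 2 := by
      rw [show t * e i - t * e j = t * (e i - e j) by ring, abs_mul, abs_of_pos ht0]
      have hd2 : |e i - e j| ≤ 2 := abs_le.mpr ⟨by linarith, by linarith⟩
      calc t * |e i - e j| ≤ 1 * 2 :=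
            mul_le_mul ht1 hd2 (abs_nonneg _) (by norm_num)
        _ = 2 := by norm_num
    have hc := cos_quad_bound habs
    have heq2 : (t * e i - t * e j) ^ 2 = t ^ 2 * (e i - e j) ^ 2 := by ring
    have heq4 : (t * e i - t * e j) ^ 4 = t ^ 4 * (e i - e j) ^ 4 := by ring
    have h4 : (e i - e j) ^ 4 ≤ 16 := by nlinarith [sq_nonneg (e i - e j)]
    have h5 : t ^ 4 * (e i - e j) ^ 4 ≤ t ^ 4 * 16 :=
      mul_le_mul_of_nonneg_left h4 (by positivity)
    rw [heq2, heq4] at hc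
    linarith
  have hdouble : ∑ i, ∑ j, (e i - e j) ^ 2 = 2 * d * S := by
    have hrow : ∀ i : Fin d, ∑ j, (e i - e j) ^ 2 = d * (e i) ^ 2 + S := by
      intro i
      have : ∀ j, (e i - e j) ^ 2 = (e i) ^ 2 - 2 * e i * e j + (e j) ^ 2 := fun j => by ring
      simp_rw [this]
      rw [Finset.sum_add_distrib, Finset.sum_sub_distrib, ← Finset.mul_sum, hsum,
        Finset.sum_const, Finset.card_univ, Fintype.card_fin]
      ring
    simp_rw [hrow]
    rw [Finset.sum_add_distrib, ← Finset.mul_sum, Finset.sum_const, Finset.card_univ,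
      Fintype.card_fin]
    ring
  have h2 : ∑ i, ∑ j, Real.cos (t * e i - t * e j)
      ≤ ∑ i, ∑ j, ((1:ℝ) - t ^ 2 * (e i - e j) ^ 2 / 2 + t ^ 4) :=
    Finset.sum_le_sum fun i _ => Finset.sum_le_sum fun j _ => hperterm i j
  have h3 : ∑ i, ∑ j, ((1:ℝ) - t ^ 2 * (e i - e j) ^ 2 / 2 + t ^ 4)
      = (d : ℝ) ^ 2 * (1 + t ^ 4) - t ^ 2 / 2 * (2 * (d : ℝ) * S) := by
    have hee : ∀ i j : Fin d, (1:ℝ) - t ^ 2 * (e i - e j) ^ 2 / 2 + t ^ 4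
        = (1 + t ^ 4) - t ^ 2 / 2 * (e i - e j) ^ 2 := fun i j => by ring
    simp_rw [hee, Finset.sum_sub_distrib, Finset.sum_const, Finset.card_univ,
      Fintype.card_fin, ← Finset.mul_sum, hdouble, nsmul_eq_mul]
    ring
  have hpos : (0:ℝ) ≤ (d : ℝ) ^ 2 * t ^ 4 := by positivity
  rw [h1]
  calc ∑ i, ∑ j, Real.cos (t * e i - t * e j)
      ≤ ∑ i, ∑ j, ((1:ℝ) - t ^ 2 * (e i - e j) ^ 2 / 2 + t ^ 4) := h2
    _ = (d : ℝ) ^ 2 * (1 + t ^ 4) - t ^ 2 / 2 * (2 * (d : ℝ) * S) := h3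
    _ ≤ (d : ℝ) ^ 2 - (d : ℝ) * t ^ 2 * S + 4 * (d : ℝ) ^ 2 * t ^ 4 := by nlinarith

/-- Let `H` be a `d×d` Hermitian matrix with `‖H‖_∞ ≤ 1` and `Tr H = 0`, and let
`0 < t ≤ 1`. Then `|Tr(e^{itH})|² ≤ d² − d·t²·Tr(H²) + 4·d²·t⁴`. -/
theorem stmt_12 (d : ℕ) (H : Matrix (Fin d) (Fin d) ℂ)
    (hH : H.IsHermitian) (hHnorm : ‖H‖ ≤ 1) (hHtr : H.trace = 0)
    (t : ℝ) (ht0 : 0 < t) (ht1 : t ≤ 1) :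
    ‖(NormedSpace.exp (((t : ℂ) * Complex.I) • H)).trace‖ ^ 2 ≤
      (d : ℝ) ^ 2 - (d : ℝ) * t ^ 2 * ((H * H).trace.re) + 4 * (d : ℝ) ^ 2 * t ^ 4 := by
  have hUU : star (hH.eigenvectorUnitary : Matrix (Fin d) (Fin d) ℂ) *
      (hH.eigenvectorUnitary : Matrix (Fin d) (Fin d) ℂ) = 1 :=
    Matrix.UnitaryGroup.star_mul_self _
  set e := hH.eigenvalues with he_def
  -- trace = sum of eigenvalues
  have htr : H.trace = ∑ i, (e i : ℂ) := by
    conv_lhs => rw [hH.spectral_theorem, Unitary.conjStarAlgAut_apply]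
    rw [Matrix.trace_mul_cycle, hUU, one_mul, Matrix.trace_diagonal]
    rfl
  -- trace of H² = sum of squares
  have hHH : H * H = (hH.eigenvectorUnitary : Matrix (Fin d) (Fin d) ℂ) *
      diagonal (fun i => ((e i : ℂ)) ^ 2) *
      star (hH.eigenvectorUnitary : Matrix (Fin d) (Fin d) ℂ) := by
    conv_lhs => rw [hH.spectral_theorem, Unitary.conjStarAlgAut_apply]
    simp only [← mul_assoc]
    rw [mul_assoc _ (star (hH.eigenvectorUnitary : Matrix (Fin d) (Fin d) ℂ)), hUU, mul_one,
      mul_assoc (hH.eigenvectorUnitary : Matrix (Fin d) (Fin d) ℂ), diagonal_mul_diagonal]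
    congr 2
    funext i
    simp [sq, he_def]
  have htr2 : (H * H).trace = ∑ i, ((e i : ℂ)) ^ 2 := by
    rw [hHH, Matrix.trace_mul_cycle, hUU, one_mul, Matrix.trace_diagonal]
  -- trace of exponential
  have hsm : ((t : ℂ) * Complex.I) • H = (hH.eigenvectorUnitary : Matrix (Fin d) (Fin d) ℂ) *
      diagonal (fun i => ((t : ℂ) * Complex.I * (e i : ℂ))) *
      star (hH.eigenvectorUnitary : Matrix (Fin d) (Fin d) ℂ) := by
    conv_lhs => rw [hH.spectral_theorem, Unitary.conjStarAlgAut_apply]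
    rw [← smul_mul_assoc, ← mul_smul_comm, ← Matrix.diagonal_smul]
    congr 2
  have hexp : (NormedSpace.exp (((t : ℂ) * Complex.I) • H)).trace
      = ∑ i, Complex.exp ((t : ℂ) * Complex.I * (e i : ℂ)) := by
    rw [hsm]
    have hconj := Matrix.exp_units_conj (Unitary.toUnits hH.eigenvectorUnitary)
      (diagonal (fun i => ((t : ℂ) * Complex.I * (e i : ℂ))))
    have h1 : (((Unitary.toUnits hH.eigenvectorUnitary : (Matrix (Fin d) (Fin d) ℂ)ˣ)) :
        Matrix (Fin d) (Fin d) ℂ) = (hH.eigenvectorUnitary : Matrix (Fin d) (Fin d) ℂ) := rfl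
    have h2 : (((Unitary.toUnits hH.eigenvectorUnitary : (Matrix (Fin d) (Fin d) ℂ)ˣ))⁻¹ :
        (Matrix (Fin d) (Fin d) ℂ)ˣ).val
        = star (hH.eigenvectorUnitary : Matrix (Fin d) (Fin d) ℂ) := rfl
    rw [h1, h2] at hconj
    rw [hconj, Matrix.trace_mul_cycle, hUU, one_mul, Matrix.exp_diagonal,
      Matrix.trace_diagonal]
    refine Finset.sum_congr rfl fun i _ => ?_
    rw [Pi.coe_exp, ← Complex.exp_eq_exp_ℂ]
  -- eigenvalue bounds
  have he : ∀ i, |e i| ≤ 1 := by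
    intro i
    haveI : Nonempty (Fin d) := ⟨i⟩
    have hmem : (e i : ℂ) ∈ spectrum ℂ H :=
      spectrum.algebraMap_mem ℂ (hH.eigenvalues_mem_spectrum_real i)
    have h := spectrum.norm_le_norm_of_mem hmem
    rw [Complex.norm_real] at h
    calc |e i| = ‖e i‖ := rfl
      _ ≤ ‖H‖ := h
      _ ≤ 1 := hHnorm
  -- sum of eigenvalues is zero
  have hsum : ∑ i, e i = 0 := by
    have : ((∑ i, e i : ℝ) : ℂ) = 0 := by
      push_cast
      rw [← htr, hHtr]
    exact_mod_cast this
  -- real part of trace of H²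
  have htr2re : (H * H).trace.re = ∑ i, (e i) ^ 2 := by
    rw [htr2, Complex.re_sum]
    refine Finset.sum_congr rfl fun i _ => ?_
    rw [← Complex.ofReal_pow, Complex.ofReal_re]
  -- rewrite the trace of exp in terms of cos and sin
  have hre : ((NormedSpace.exp (((t : ℂ) * Complex.I) • H)).trace).re
      = ∑ i, Real.cos (t * e i) := by
    rw [hexp, Complex.re_sum]
    refine Finset.sum_congr rfl fun i _ => ?_
    rw [show (t : ℂ) * Complex.I * (e i : ℂ) = ((t * e i : ℝ) : ℂ) * Complex.I by
      push_cast; ring]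
    exact Complex.exp_ofReal_mul_I_re _
  have him : ((NormedSpace.exp (((t : ℂ) * Complex.I) • H)).trace).im
      = ∑ i, Real.sin (t * e i) := by
    rw [hexp, Complex.im_sum]
    refine Finset.sum_congr rfl fun i _ => ?_
    rw [show (t : ℂ) * Complex.I * (e i : ℂ) = ((t * e i : ℝ) : ℂ) * Complex.I by
      push_cast; ring]
    exact Complex.exp_ofReal_mul_I_im _
  rw [htr2re, ← Complex.normSq_eq_norm_sq, Complex.normSq_apply, hre, him]
  calc (∑ i, Real.cos (t * e i)) * (∑ i, Real.cos (t * e i)) +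
        (∑ i, Real.sin (t * e i)) * (∑ i, Real.sin (t * e i))
      = (∑ i, Real.cos (t * e i)) ^ 2 + (∑ i, Real.sin (t * e i)) ^ 2 := by ring
    _ ≤ (d : ℝ) ^ 2 - (d : ℝ) * t ^ 2 * (∑ i, (e i) ^ 2) + 4 * (d : ℝ) ^ 2 * t ^ 4 :=
      key_sum_bound d e he hsum t ht0 ht1
end
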